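/- Assume s divides m and m/s is even. Then the number of elements β ∈ F_q for which the equation X^{p^{2l}} + X = −β^{p^l} has a solution X ∈ F_q equals p^{e-2s}. -/

import Mathlib

open Finset Polynomial
open scoped Classical

private lemma sign_iter {R : Type*} [CommMonoid R] [HasDistribNeg R] {n : ℕ} (hn : Odd n)
    {x : R} (h : x ^ n = -x) (k : ℕ) : x ^ n ^ k = (-1) ^ k * x := by
  induction k with
  | zero => simp
  | succ k ih =>
    have h1 : x ^ n ^ (k + 1) = (x ^ n ^ k) ^ n := by rw [← pow_mul, pow_succ]
    have h2 : ((-1 : R) ^ k) ^ n = (-1) ^ k := by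
      rw [← pow_mul, mul_comm, pow_mul, hn.neg_one_pow]
    rw [h1, ih, mul_pow, h2, h, pow_succ, mul_assoc, neg_one_mul]

private lemma pow_reduce {K : Type*} [Monoid K] {x : K} {p e : ℕ} (hx : x ^ p ^ e = x)
    (r k : ℕ) : x ^ p ^ (r + e * k) = x ^ p ^ r := by
  induction k with
  | zero => simp
  | succ k ih =>
    have h1 : r + e * (k + 1) = e + (r + e * k) := by ring
    rw [h1, pow_add, pow_mul, hx, ih]

private lemma card_ker_M {p : ℕ} [Fact p.Prime] {K : Type*} [Field K] [Fintype K] [CharP K p]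
    {e s : ℕ} (hs : 0 < s) (hcard : Fintype.card K = p ^ e) (hdvd : 4 * s ∣ e) :
    (Finset.univ.filter fun x : K => x ^ p ^ (2 * s) + x = 0).card = p ^ (2 * s) := by
  have hp1 : 1 < p := (Fact.out : p.Prime).one_lt
  have hQ : 1 < p ^ (2 * s) := Nat.one_lt_pow (by omega) hp1
  set g : K[X] := X ^ p ^ (2 * s) + X with hg
  have hfrob : g ^ p ^ (2 * s) = X ^ p ^ (4 * s) + X ^ p ^ (2 * s) := by
    rw [hg, add_pow_char_pow, ← pow_mul, ← pow_add]
    norm_num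
    ring_nf
  have gdvd1 : g ∣ X ^ p ^ (4 * s) - X := by
    have h1 : (X ^ p ^ (4 * s) - X : K[X]) = g ^ p ^ (2 * s) - g := by
      rw [hfrob, hg]; ring
    rw [h1]
    exact dvd_sub (dvd_pow_self g (by positivity)) dvd_rfl
  have gdvd2 : ∀ k : ℕ, g ∣ X ^ p ^ (4 * s * k) - X := by
    intro k
    induction k with
    | zero => simp
    | succ k ih =>
      have h1 : (X ^ p ^ (4 * s * (k + 1)) - X : K[X])
          = (X ^ p ^ (4 * s * k) - X) ^ p ^ (4 * s) + (X ^ p ^ (4 * s) - X) := by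
        rw [sub_pow_char_pow, ← pow_mul, ← pow_add]
        have : 4 * s * k + 4 * s = 4 * s * (k + 1) := by ring
        rw [this]; ring
      rw [h1]
      exact dvd_add (Dvd.dvd.pow ih (by positivity)) gdvd1
  obtain ⟨c, hc⟩ := hdvd
  have gdvdf : g ∣ X ^ p ^ e - X := hc ▸ gdvd2 c
  have he1 : 1 < p ^ e := hcard ▸ Fintype.one_lt_card
  have hf0 : (X ^ p ^ e - X : K[X]) ≠ 0 := FiniteField.X_pow_card_sub_X_ne_zero K he1
  have hrootsf : (X ^ p ^ e - X : K[X]).roots = Finset.univ.val := by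
    have := FiniteField.roots_X_pow_card_sub_X K
    rwa [hcard] at this
  have hsplitsf : (X ^ p ^ e - X : K[X]).Splits := by
    rw [splits_iff_card_roots, hrootsf, FiniteField.X_pow_card_sub_X_natDegree_eq K he1]
    rw [← hcard]; exact Finset.card_univ
  have hsplitsg : g.Splits := Splits.of_dvd hsplitsf hf0 gdvdf
  have hdegg : g.natDegree = p ^ (2 * s) := by
    have hdg : g.degree = (p ^ (2 * s) : ℕ) := by
      rw [hg, degree_add_eq_left_of_degree_lt, degree_X_pow]
      rw [degree_X_pow, degree_X]
      exact_mod_cast hQ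
    exact natDegree_eq_of_degree_eq_some hdg
  have hg0 : g ≠ 0 := by
    intro h
    rw [h, natDegree_zero] at hdegg
    omega
  have hcardroots : g.roots.card = p ^ (2 * s) := by
    rw [splits_iff_card_roots] at hsplitsg
    rw [hsplitsg, hdegg]
  have hnodup : g.roots.Nodup := by
    have hle := Polynomial.roots.le_of_dvd hf0 gdvdf
    rw [hrootsf] at hle
    exact Multiset.nodup_of_le hle Finset.univ.nodup
  have hfilter : (Finset.univ.filter fun x : K => x ^ p ^ (2 * s) + x = 0) = g.roots.toFinset := by
    ext x
    rw [Multiset.mem_toFinset, mem_roots hg0]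
    simp [IsRoot, hg]
  rw [hfilter, Multiset.toFinset_card_of_nodup hnodup, hcardroots]

private lemma main_aux (p : ℕ) [Fact p.Prime] (hp : Odd p) (l m e s : ℕ)
    (hl : 0 < l) (hm : 1 ≤ m) (he : e = 2 * m) (hs : s = Nat.gcd l e)
    (hsm : s ∣ m) (heven : Even (m / s))
    {K : Type*} [Field K] [Fintype K] [CharP K p]
    (hcard : Fintype.card K = p ^ e) :
    (Finset.univ.filter fun β : K => ∃ X : K, X ^ p ^ (2 * l) + X = -β ^ p ^ l).card
      = p ^ (e - 2 * s) := by
  have hp1 : 1 < p := (Fact.out : p.Prime).one_lt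
  have hs0 : 0 < s := hs ▸ Nat.gcd_pos_of_pos_left e hl
  have hsl : s ∣ l := hs ▸ Nat.gcd_dvd_left l e
  obtain ⟨t, ht⟩ := heven
  have hms : s * (m / s) = m := Nat.mul_div_cancel' hsm
  have hm' : m = s * (2 * t) := by rw [← hms, ht]; ring
  have ht1 : 1 ≤ t := by
    rcases Nat.eq_zero_or_pos t with h0 | h0
    · rw [h0] at hm'; simp at hm'; omega
    · exact h0
  have he4 : e = 4 * s * t := by rw [he, hm']; ring
  set u := l / s with hu
  have hlu : s * u = l := Nat.mul_div_cancel' hsl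
  have hcop : Nat.Coprime u (4 * t) := by
    have h1 := Nat.coprime_div_gcd_div_gcd (hs ▸ hs0 : 0 < Nat.gcd l e)
    rw [← hs] at h1
    have h2 : e / s = 4 * t := by
      rw [he4, show 4 * s * t = s * (4 * t) by ring, Nat.mul_div_cancel_left _ hs0]
    rwa [h2] at h1
  have hu_odd : Odd u := by
    rcases Nat.even_or_odd u with h | h
    · exfalso
      obtain ⟨w, hw⟩ := h
      have h2 : 2 ∣ Nat.gcd u (4 * t) := Nat.dvd_gcd ⟨w, by omega⟩ ⟨2 * t, by ring⟩
      rw [hcop] at h2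
      omega
    · exact h
  have hcop2 : Nat.Coprime u (2 * t) :=
    Nat.Coprime.coprime_dvd_right ⟨2, by ring⟩ hcop
  obtain ⟨v, -, hv⟩ := Nat.exists_mul_mod_eq_one_of_coprime hcop2 (by omega)
  set k := u * v / (2 * t) with hk
  have huv : u * v = 2 * t * k + 1 := by
    have h3 := Nat.div_add_mod (u * v) (2 * t)
    rw [hv] at h3
    rw [hk]
    exact h3.symm
  have hv_odd : Odd v := by
    have h1 : Odd (u * v) := by rw [huv]; exact ⟨t * k, by ring⟩
    exact (Nat.odd_mul.mp h1).2
  have hxe : ∀ x : K, x ^ p ^ e = x := fun x => by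
    have := FiniteField.pow_card x
    rwa [hcard] at this
  -- kernel equality
  have key : ∀ x : K, x ^ p ^ (2 * l) + x = 0 ↔ x ^ p ^ (2 * s) + x = 0 := by
    intro x
    constructor
    · intro h
      have h' : x ^ p ^ (2 * l) = -x := eq_neg_of_add_eq_zero_left h
      have h2 := sign_iter (hp.pow : Odd (p ^ (2 * l))) h' v
      rw [← pow_mul] at h2
      have hexp : 2 * l * v = 2 * s + e * k := by
        calc 2 * l * v = 2 * s * (u * v) := by rw [← hlu]; ring
        _ = 2 * s * (2 * t * k + 1) := by rw [huv]
        _ = 2 * s + e * k := by rw [he4]; ring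
      rw [hexp, pow_reduce (hxe x), hv_odd.neg_one_pow, neg_one_mul] at h2
      rw [h2]
      ring
    · intro h
      have h' : x ^ p ^ (2 * s) = -x := eq_neg_of_add_eq_zero_left h
      have h2 := sign_iter (hp.pow : Odd (p ^ (2 * s))) h' u
      rw [← pow_mul, show 2 * s * u = 2 * l by rw [← hlu]; ring,
        hu_odd.neg_one_pow, neg_one_mul] at h2
      rw [h2]
      ring
  let L : K →+ K :=
    { toFun := fun x => x ^ p ^ (2 * l) + x
      map_zero' := by simp [zero_pow (pow_ne_zero _ (by omega : p ≠ 0))]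
      map_add' := fun x y => by
        show (x + y) ^ p ^ (2 * l) + (x + y) = _
        rw [add_pow_char_pow]
        ring }
  have hLdef : ∀ x : K, L x = x ^ p ^ (2 * l) + x := fun x => rfl
  have hinj : Function.Injective fun y : K => y ^ p ^ l := by
    have h1 := (iterateFrobenius K p l).injective
    have h2 : ⇑(iterateFrobenius K p l) = fun y : K => y ^ p ^ l := by
      funext y; exact iterateFrobenius_def p l y
    rwa [h2] at h1
  have hsurj : Function.Surjective fun y : K => y ^ p ^ l :=
    Finite.surjective_of_injective hinj
  have hstep1 : (Finset.univ.filter fun β : K => ∃ X : K, X ^ p ^ (2 * l) + X = -β ^ p ^ l).card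
      = (Finset.univ.filter fun y : K => ∃ X : K, X ^ p ^ (2 * l) + X = y).card := by
    apply Finset.card_bij (fun β _ => -β ^ p ^ l)
    · intro a ha
      simp only [Finset.mem_filter, Finset.mem_univ, true_and] at ha ⊢
      exact ha
    · intro a ha b hb hab
      exact hinj (neg_injective hab)
    · intro y hy
      obtain ⟨β, hβ⟩ := hsurj (-y)
      simp only [Finset.mem_filter, Finset.mem_univ, true_and] at hy ⊢
      have hβ' : -β ^ p ^ l = y := by
        simp only at hβ
        rw [hβ, neg_neg]
      exact ⟨β, by rw [hβ']; exact hy, hβ'⟩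
  have hstep2 : (Finset.univ.filter fun y : K => ∃ X : K, X ^ p ^ (2 * l) + X = y)
      = (Set.range L).toFinset := by
    ext y
    simp only [Finset.mem_filter, Finset.mem_univ, true_and, Set.mem_toFinset, Set.mem_range]
    exact exists_congr fun X => by rw [hLdef]
  have hker : Nat.card L.ker = p ^ (2 * s) := by
    calc Nat.card L.ker = Nat.card {x : K // x ^ p ^ (2 * l) + x = 0} :=
          Nat.card_congr (Equiv.subtypeEquivRight fun x => by
            rw [AddMonoidHom.mem_ker, hLdef])
    _ = Fintype.card {x : K // x ^ p ^ (2 * l) + x = 0} := Nat.card_eq_fintype_card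
    _ = (Finset.univ.filter fun x : K => x ^ p ^ (2 * l) + x = 0).card := Fintype.card_subtype _
    _ = (Finset.univ.filter fun x : K => x ^ p ^ (2 * s) + x = 0).card := by
          congr 1
          apply Finset.filter_congr
          intro x _
          simp only [key x]
    _ = p ^ (2 * s) := card_ker_M hs0 hcard ⟨t, he4⟩
  have hrange : Nat.card L.range * p ^ (2 * s) = p ^ e := by
    have h1 := AddSubgroup.card_eq_card_quotient_mul_card_addSubgroup (L.ker)
    have h2 : Nat.card (K ⧸ L.ker) = Nat.card L.range :=
      Nat.card_congr (QuotientAddGroup.quotientKerEquivRange L).toEquiv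
    rw [h2, hker] at h1
    rw [← h1, Nat.card_eq_fintype_card, hcard]
  have h2se : 2 * s ≤ e := by nlinarith
  have hfin : Nat.card L.range = p ^ (e - 2 * s) := by
    have hpow : p ^ e = p ^ (e - 2 * s) * p ^ (2 * s) := by
      rw [← pow_add]
      congr 1
      omega
    exact Nat.eq_of_mul_eq_mul_right (by positivity) (hrange.trans hpow)
  rw [hstep1, hstep2, Set.toFinset_card, ← Nat.card_eq_fintype_card, ← hfin]
  rfl

/-- Lemma 3.6: if `m/s` is even, then the number of `β ∈ F_q` such that the equation
`X^{p^{2l}} + X = -β^{p^l}` is solvable in `F_q` equals `p^{e-2s}`. -/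
theorem card_solvable_betas
    (p : ℕ) [Fact p.Prime] (hp : Odd p) (l m e s : ℕ)
    (hl : 0 < l) (hm : 1 ≤ m) (he : e = 2 * m) (hs : s = Nat.gcd l e)
    (hsm : s ∣ m) (heven : Even (m / s)) :
    letI : Fintype (GaloisField p e) := Fintype.ofFinite _
    (Finset.univ.filter (fun β : GaloisField p e =>
        ∃ X : GaloisField p e, X ^ (p ^ (2 * l)) + X = -β ^ (p ^ l))).card
      = p ^ (e - 2 * s) := by
  letI : Fintype (GaloisField p e) := Fintype.ofFinite _
  have he0 : e ≠ 0 := by omega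
  have hcard : Fintype.card (GaloisField p e) = p ^ e := by
    rw [← Nat.card_eq_fintype_card]
    exact GaloisField.card p e he0
  exact main_aux p hp l m e s hl hm he hs hsm heven hcard
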